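/- (Brézis–Gallouët-type inequality in sequence form, 2D.) There is an absolute constant $C$ such that for every sequence $(\hat u(k))_{k\in\mathbb{Z}^2}$ with $\hat u(0)=0$, and every real $\lambda \geq e$, $\sum_{k \neq 0} |\hat u(k)| \leq C (\log \lambda)^{1/2} \left(\sum_k |k|^2 |\hat u(k)|^2\right)^{1/2} + C \lambda^{-1} \left(\sum_k |k|^4 |\hat u(k)|^2\right)^{1/2}$. -/

import Mathlib

/-- Euclidean norm of a lattice vector `k ∈ ℤ²`. -/
noncomputable def nrm (k : Fin 2 → ℤ) : ℝ := Real.sqrt (∑ i, ((k i : ℝ)) ^ 2)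

namespace BGaux

open Finset

open scoped ENNReal NNReal

local notation "O" => ENNReal.ofReal

lemma nrm_nonneg (k : Fin 2 → ℤ) : 0 ≤ nrm k := Real.sqrt_nonneg _

lemma nrm_pair (p q : ℤ) :
    nrm ((finTwoArrowEquiv ℤ).symm (p, q)) = Real.sqrt ((p : ℝ) ^ 2 + (q : ℝ) ^ 2) := by
  simp [nrm, finTwoArrowEquiv, Fin.sum_univ_two]

lemma pair_eq_zero (p q : ℤ) :
    ((finTwoArrowEquiv ℤ).symm (p, q) = 0) ↔ (p = 0 ∧ q = 0) := by
  constructor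
  · intro h
    have h0 := congrFun h 0
    have h1 := congrFun h 1
    simp [finTwoArrowEquiv] at h0 h1
    exact ⟨h0, h1⟩
  · rintro ⟨rfl, rfl⟩
    funext i
    fin_cases i <;> simp [finTwoArrowEquiv]

lemma one_le_nrm {k : Fin 2 → ℤ} (hk : k ≠ 0) : 1 ≤ nrm k := by
  have h : (1 : ℝ) ≤ ∑ i, ((k i : ℝ)) ^ 2 := by
    have : k 0 ≠ 0 ∨ k 1 ≠ 0 := by
      by_contra h
      push_neg at h
      apply hk
      funext i
      fin_cases i
      · exact h.1
      · exact h.2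
    rw [Fin.sum_univ_two]
    rcases this with h | h
    · have h1 : (1 : ℤ) ≤ |k 0| := Int.one_le_abs h
      have h2 : (1 : ℝ) ≤ ((|k 0| : ℤ) : ℝ) := by exact_mod_cast h1
      rw [Int.cast_abs] at h2
      nlinarith [sq_nonneg ((k 1 : ℝ)), sq_abs ((k 0 : ℝ))]
    · have h1 : (1 : ℤ) ≤ |k 1| := Int.one_le_abs h
      have h2 : (1 : ℝ) ≤ ((|k 1| : ℤ) : ℝ) := by exact_mod_cast h1
      rw [Int.cast_abs] at h2
      nlinarith [sq_nonneg ((k 0 : ℝ)), sq_abs ((k 1 : ℝ))]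
  calc (1:ℝ) = Real.sqrt 1 := (Real.sqrt_one).symm
  _ ≤ nrm k := Real.sqrt_le_sqrt h

/-- Conversion: an `ENNReal` tsum bound gives real summability plus a real tsum bound. -/
lemma of_tsumO_le {ι : Type*} {g : ι → ℝ} (hg : ∀ i, 0 ≤ g i) {c : ℝ} (hc : 0 ≤ c)
    (h : ∑' i, O (g i) ≤ O c) : Summable g ∧ ∑' i, g i ≤ c := by
  have hne : ∑' i, O (g i) ≠ ⊤ := (h.trans_lt ENNReal.ofReal_lt_top).ne
  have hsum : Summable g := by
    have := ENNReal.summable_toReal hne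
    refine this.congr fun i => ?_
    simp [ENNReal.toReal_ofReal (hg i)]
  refine ⟨hsum, ?_⟩
  have heq : O (∑' i, g i) = ∑' i, O (g i) := ENNReal.ofReal_tsum_of_nonneg hg hsum
  rw [← ENNReal.ofReal_le_ofReal_iff hc, heq]
  exact h

/-- Cauchy–Schwarz for tsums of nonnegative reals. -/
lemma tsum_CS {ι : Type*} {f g : ι → ℝ} (hf : ∀ i, 0 ≤ f i) (hg : ∀ i, 0 ≤ g i)
    (hf2 : Summable fun i => f i ^ 2) (hg2 : Summable fun i => g i ^ 2) :
    Summable (fun i => f i * g i) ∧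
      ∑' i, f i * g i ≤ Real.sqrt (∑' i, f i ^ 2) * Real.sqrt (∑' i, g i ^ 2) := by
  have hsum : Summable (fun i => f i * g i) := by
    refine Summable.of_nonneg_of_le (fun i => mul_nonneg (hf i) (hg i)) (fun i => ?_)
      ((hf2.add hg2).div_const 2)
    nlinarith [sq_nonneg (f i - g i)]
  refine ⟨hsum, Summable.tsum_le_of_sum_le hsum fun s => ?_⟩
  refine (Real.sum_mul_le_sqrt_mul_sqrt s f g).trans ?_
  have h1 : ∑ i ∈ s, f i ^ 2 ≤ ∑' i, f i ^ 2 := Summable.sum_le_tsum s (fun i _ => sq_nonneg _) hf2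
  have h2 : ∑ i ∈ s, g i ^ 2 ≤ ∑' i, g i ^ 2 := Summable.sum_le_tsum s (fun i _ => sq_nonneg _) hg2
  exact mul_le_mul (Real.sqrt_le_sqrt h1) (Real.sqrt_le_sqrt h2) (Real.sqrt_nonneg _)
    (Real.sqrt_nonneg _)

/-- `ℕ`-tsum in `ℝ≥0∞` bounded by a uniform partial-sum bound. -/
lemma tsumO_le {g : ℕ → ℝ} {c : ℝ} (h : ∀ N, ∑ n ∈ range N, g n ≤ c)
    (hg : ∀ n, 0 ≤ g n) : ∑' n, O (g n) ≤ O c := by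
  rw [ENNReal.tsum_eq_iSup_sum]
  refine iSup_le fun s => ?_
  obtain ⟨N, hN⟩ := s.exists_nat_subset_range
  calc ∑ n ∈ s, O (g n) ≤ ∑ n ∈ range N, O (g n) := Finset.sum_le_sum_of_subset hN
  _ = O (∑ n ∈ range N, g n) := (ENNReal.ofReal_sum_of_nonneg fun i _ => hg i).symm
  _ ≤ O c := ENNReal.ofReal_le_ofReal (h N)

/-- Splitting a `ℤ`-tsum in `ℝ≥0∞`. -/
lemma tsum_int_e (f : ℤ → ℝ≥0∞) :
    ∑' p : ℤ, f p = f 0 + ∑' n : ℕ, f ((n : ℤ) + 1) + ∑' n : ℕ, f (-((n : ℤ) + 1)) := by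
  rw [tsum_of_nat_of_neg_add_one ENNReal.summable ENNReal.summable,
    tsum_eq_zero_add' (f := fun n : ℕ => f (n : ℤ)) ENNReal.summable]
  push_cast
  ring

/-- Telescoping tail bound: `∑_{m > a} 1/m² ≤ 1/a`. -/
lemma tailfin (a : ℕ) (ha : 1 ≤ a) (N : ℕ) :
    ∑ n ∈ range N, (if a ≤ n then (((n : ℝ) + 1) ^ 2)⁻¹ else 0) ≤ (a : ℝ)⁻¹ := by
  have key : ∀ N : ℕ, ∑ n ∈ range N, (if a ≤ n then (((n : ℝ) + 1) ^ 2)⁻¹ else 0)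
      ≤ (a : ℝ)⁻¹ - ((max a N : ℕ) : ℝ)⁻¹ := by
    intro N
    induction N with
    | zero => simp [Nat.max_eq_left (Nat.zero_le a)]
    | succ N ih =>
      rw [Finset.sum_range_succ]
      by_cases hN : a ≤ N
      · have h1 : max a N = N := max_eq_right hN
        have h2 : max a (N + 1) = N + 1 := max_eq_right (hN.trans (Nat.le_succ N))
        rw [if_pos hN, h2]
        rw [h1] at ih
        have hNpos : (0 : ℝ) < N := by
          have h3 : (1 : ℕ) ≤ N := ha.trans hN
          exact_mod_cast Nat.lt_of_lt_of_le Nat.zero_lt_one h3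
        have hstep : (((N : ℝ) + 1) ^ 2)⁻¹ ≤ (N : ℝ)⁻¹ - ((N : ℝ) + 1)⁻¹ := by
          have e1 : (N : ℝ)⁻¹ - ((N : ℝ) + 1)⁻¹ = ((N : ℝ) * ((N : ℝ) + 1))⁻¹ := by
            field_simp
            ring
          rw [e1]
          apply inv_anti₀ (by positivity)
          nlinarith
        have hcast : ((N + 1 : ℕ) : ℝ) = (N : ℝ) + 1 := by push_cast; ring
        rw [hcast]
        linarith
      · rw [if_neg hN]
        have h1 : max a N = a := max_eq_left (le_of_lt (lt_of_not_ge hN))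
        have h2 : max a (N + 1) = a := max_eq_left (Nat.succ_le_of_lt (lt_of_not_ge hN))
        rw [h1] at ih
        rw [h2]
        simpa using ih
  refine (key N).trans ?_
  have : (0:ℝ) ≤ ((max a N : ℕ) : ℝ)⁻¹ := by positivity
  linarith

lemma finSq (N : ℕ) : ∑ n ∈ range N, (((n : ℝ) + 1) ^ 2)⁻¹ ≤ 2 := by
  have h : ∀ n : ℕ, (((n : ℝ) + 1) ^ 2)⁻¹ ≤
      (if n = 0 then (1 : ℝ) else 0) + (if 1 ≤ n then (((n : ℝ) + 1) ^ 2)⁻¹ else 0) := by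
    intro n
    rcases n with _ | n
    · norm_num
    · simp
  calc ∑ n ∈ range N, (((n : ℝ) + 1) ^ 2)⁻¹
      ≤ ∑ n ∈ range N, ((if n = 0 then (1 : ℝ) else 0) +
        (if 1 ≤ n then (((n : ℝ) + 1) ^ 2)⁻¹ else 0)) := Finset.sum_le_sum fun i _ => h i
  _ = (∑ n ∈ range N, (if n = 0 then (1 : ℝ) else 0)) +
      ∑ n ∈ range N, (if 1 ≤ n then (((n : ℝ) + 1) ^ 2)⁻¹ else 0) := Finset.sum_add_distrib
  _ ≤ 1 + 1 := by
      apply add_le_add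
      · calc ∑ n ∈ range N, (if n = 0 then (1 : ℝ) else 0)
            = if (0 : ℕ) ∈ range N then (1:ℝ) else 0 := by
              rw [Finset.sum_ite_eq' (range N) 0 (fun _ => (1:ℝ))]
        _ ≤ 1 := by split <;> norm_num
      · simpa using tailfin 1 le_rfl N
  _ = 2 := by norm_num

lemma finCount (a : ℕ) (c : ℝ) (hc : 0 ≤ c) (N : ℕ) :
    ∑ n ∈ range N, (if n < a then c else 0) ≤ (a : ℝ) * c := by
  rw [← Finset.sum_filter]
  have hsub : (range N).filter (fun n => n < a) ⊆ range a := by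
    intro x hx
    simp only [Finset.mem_filter, Finset.mem_range] at hx ⊢
    exact hx.2
  calc ∑ _n ∈ (range N).filter (fun n => n < a), c
      ≤ ∑ _n ∈ range a, c := Finset.sum_le_sum_of_subset_of_nonneg hsub fun _ _ _ => hc
  _ = (a : ℝ) * c := by simp [mul_comm]

lemma finInner2 (a : ℕ) (ha : 1 ≤ a) (N : ℕ) :
    ∑ n ∈ range N, ((a : ℝ) ^ 2 + ((n : ℝ) + 1) ^ 2)⁻¹ ≤ 2 / (a : ℝ) := by
  have ha' : (0 : ℝ) < a := by exact_mod_cast ha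
  have h : ∀ n : ℕ, ((a : ℝ) ^ 2 + ((n : ℝ) + 1) ^ 2)⁻¹ ≤
      (if n < a then ((a : ℝ) ^ 2)⁻¹ else 0) + (if a ≤ n then (((n : ℝ) + 1) ^ 2)⁻¹ else 0) := by
    intro n
    by_cases hn : n < a
    · rw [if_pos hn, if_neg (not_le.mpr hn), add_zero]
      apply inv_anti₀ (by positivity)
      nlinarith [sq_nonneg ((n : ℝ) + 1)]
    · rw [if_neg hn, if_pos (le_of_not_gt hn), zero_add]
      apply inv_anti₀ (by positivity)
      nlinarith [sq_nonneg ((a : ℝ))]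
  calc ∑ n ∈ range N, ((a : ℝ) ^ 2 + ((n : ℝ) + 1) ^ 2)⁻¹
      ≤ ∑ n ∈ range N, ((if n < a then ((a : ℝ) ^ 2)⁻¹ else 0) +
        (if a ≤ n then (((n : ℝ) + 1) ^ 2)⁻¹ else 0)) := Finset.sum_le_sum fun i _ => h i
  _ = (∑ n ∈ range N, (if n < a then ((a : ℝ) ^ 2)⁻¹ else 0)) +
      ∑ n ∈ range N, (if a ≤ n then (((n : ℝ) + 1) ^ 2)⁻¹ else 0) := Finset.sum_add_distrib
  _ ≤ (a : ℝ) * ((a : ℝ) ^ 2)⁻¹ + (a : ℝ)⁻¹ := by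
      apply add_le_add
      · exact finCount a _ (by positivity) N
      · exact tailfin a ha N
  _ = 2 / (a : ℝ) := by field_simp; ring

lemma finInner4 (a : ℕ) (ha : 1 ≤ a) (N : ℕ) :
    ∑ n ∈ range N, (((a : ℝ) ^ 2 + ((n : ℝ) + 1) ^ 2) ^ 2)⁻¹ ≤ 2 / (a : ℝ) ^ 3 := by
  have ha' : (0 : ℝ) < a := by exact_mod_cast ha
  have h : ∀ n : ℕ, (((a : ℝ) ^ 2 + ((n : ℝ) + 1) ^ 2) ^ 2)⁻¹ ≤
      (if n < a then ((a : ℝ) ^ 4)⁻¹ else 0) +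
      (if a ≤ n then ((a : ℝ) ^ 2)⁻¹ * (((n : ℝ) + 1) ^ 2)⁻¹ else 0) := by
    intro n
    by_cases hn : n < a
    · rw [if_pos hn, if_neg (not_le.mpr hn), add_zero]
      apply inv_anti₀ (by positivity)
      nlinarith [sq_nonneg ((n : ℝ) + 1), sq_nonneg ((a:ℝ)^2 + ((n:ℝ)+1)^2)]
    · rw [if_neg hn, if_pos (le_of_not_gt hn), zero_add, ← mul_inv]
      apply inv_anti₀ (by positivity)
      nlinarith [sq_nonneg ((a : ℝ) ^ 2 - ((n : ℝ) + 1) ^ 2), sq_nonneg ((a:ℝ) * ((n:ℝ)+1))]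
  calc ∑ n ∈ range N, (((a : ℝ) ^ 2 + ((n : ℝ) + 1) ^ 2) ^ 2)⁻¹
      ≤ ∑ n ∈ range N, ((if n < a then ((a : ℝ) ^ 4)⁻¹ else 0) +
        (if a ≤ n then ((a : ℝ) ^ 2)⁻¹ * (((n : ℝ) + 1) ^ 2)⁻¹ else 0)) :=
        Finset.sum_le_sum fun i _ => h i
  _ = (∑ n ∈ range N, (if n < a then ((a : ℝ) ^ 4)⁻¹ else 0)) +
      ∑ n ∈ range N, (if a ≤ n then ((a : ℝ) ^ 2)⁻¹ * (((n : ℝ) + 1) ^ 2)⁻¹ else 0) :=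
      Finset.sum_add_distrib
  _ ≤ (a : ℝ) * ((a : ℝ) ^ 4)⁻¹ + ((a : ℝ) ^ 2)⁻¹ * (a : ℝ)⁻¹ := by
      apply add_le_add
      · exact finCount a _ (by positivity) N
      · calc ∑ n ∈ range N, (if a ≤ n then ((a : ℝ) ^ 2)⁻¹ * (((n : ℝ) + 1) ^ 2)⁻¹ else 0)
            = ((a : ℝ) ^ 2)⁻¹ * ∑ n ∈ range N, (if a ≤ n then (((n : ℝ) + 1) ^ 2)⁻¹ else 0) := by
              rw [Finset.mul_sum]
              congr 1
              funext n
              split <;> simp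
        _ ≤ ((a : ℝ) ^ 2)⁻¹ * (a : ℝ)⁻¹ := by
              apply mul_le_mul_of_nonneg_left (tailfin a ha N) (by positivity)
  _ = 2 / (a : ℝ) ^ 3 := by field_simp; ring

lemma finHarm (lam : ℝ) (hl : Real.exp 1 ≤ lam) (N : ℕ) :
    ∑ n ∈ range N, (if ((n : ℝ) + 1) ≤ lam then ((n : ℝ) + 1)⁻¹ else 0)
      ≤ 1 + Real.log lam := by
  have hlam0 : (0 : ℝ) < lam := lt_of_lt_of_le (Real.exp_pos 1) hl
  have hlam1 : (1 : ℝ) ≤ lam := by nlinarith [Real.exp_one_gt_d9]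
  set M := Nat.floor lam with hM
  have hM1 : 1 ≤ M := Nat.le_floor (by exact_mod_cast hlam1)
  have step : ∀ n : ℕ, (if ((n : ℝ) + 1) ≤ lam then ((n : ℝ) + 1)⁻¹ else 0) ≤
      (if n < M then ((n : ℝ) + 1)⁻¹ else 0) := by
    intro n
    split_ifs with h1 h2
    · exact le_rfl
    · exfalso
      apply h2
      have : ((n + 1 : ℕ) : ℝ) ≤ lam := by push_cast; linarith
      have := Nat.le_floor this
      omega
    · positivity
    · exact le_rfl
  calc ∑ n ∈ range N, (if ((n : ℝ) + 1) ≤ lam then ((n : ℝ) + 1)⁻¹ else 0)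
      ≤ ∑ n ∈ range N, (if n < M then ((n : ℝ) + 1)⁻¹ else 0) :=
        Finset.sum_le_sum fun i _ => step i
  _ ≤ ∑ n ∈ range M, ((n : ℝ) + 1)⁻¹ := by
      rw [← Finset.sum_filter]
      apply Finset.sum_le_sum_of_subset_of_nonneg
      · intro x hx
        simp only [Finset.mem_filter, Finset.mem_range] at hx ⊢
        exact hx.2
      · intro i _ _
        positivity
  _ = (harmonic M : ℝ) := by
      rw [harmonic]
      push_cast
      rfl
  _ ≤ 1 + Real.log M := harmonic_le_one_add_log M
  _ ≤ 1 + Real.log lam := by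
      have hMle : (M : ℝ) ≤ lam := Nat.floor_le hlam0.le
      have hMpos : (0 : ℝ) < M := by exact_mod_cast hM1
      have := Real.log_le_log hMpos hMle
      linarith

lemma finCube (lam : ℝ) (hl : Real.exp 1 ≤ lam) (N : ℕ) :
    ∑ n ∈ range N, (if lam ^ 2 / 2 < ((n : ℝ) + 1) ^ 2 then (((n : ℝ) + 1) ^ 3)⁻¹ else 0)
      ≤ 16 / lam ^ 2 := by
  have he : (2.7 : ℝ) ≤ lam := le_trans (by nlinarith [Real.exp_one_gt_d9]) hl
  have hlam0 : (0 : ℝ) < lam := by linarith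
  set a := Nat.floor (lam / 2) with haa
  have ha1 : 1 ≤ a := Nat.le_floor (by push_cast; linarith)
  have ha' : (0 : ℝ) < a := by exact_mod_cast ha1
  have hfl : (a : ℝ) ≤ lam / 2 := Nat.floor_le (by linarith)
  have hflu : lam / 2 < (a : ℝ) + 1 := Nat.lt_floor_add_one (lam / 2)
  have halam : lam ≤ 4 * a := by
    have : (1 : ℝ) ≤ a := by exact_mod_cast ha1
    linarith
  have step : ∀ n : ℕ, (if lam ^ 2 / 2 < ((n : ℝ) + 1) ^ 2 then (((n : ℝ) + 1) ^ 3)⁻¹ else 0) ≤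
      (if a ≤ n then (a : ℝ)⁻¹ * (((n : ℝ) + 1) ^ 2)⁻¹ else 0) := by
    intro n
    split_ifs with h1 h2
    · -- value bound
      rw [← mul_inv]
      apply inv_anti₀ (by positivity)
      have : (a : ℝ) ≤ (n : ℝ) + 1 := by
        have : ((a : ℕ) : ℝ) ≤ (n : ℝ) := by exact_mod_cast h2
        linarith
      nlinarith [sq_nonneg ((n:ℝ)+1)]
    · -- condition implies a ≤ n
      exfalso
      apply h2
      have hhalf : lam / 2 < (n : ℝ) + 1 := by nlinarith [sq_nonneg ((n:ℝ)+1 - lam/2)]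
      have : (a : ℝ) < (n : ℝ) + 1 := lt_of_le_of_lt hfl hhalf
      have : a < n + 1 := by exact_mod_cast this
      omega
    · positivity
    · exact le_rfl
  calc ∑ n ∈ range N, (if lam ^ 2 / 2 < ((n : ℝ) + 1) ^ 2 then (((n : ℝ) + 1) ^ 3)⁻¹ else 0)
      ≤ ∑ n ∈ range N, (if a ≤ n then (a : ℝ)⁻¹ * (((n : ℝ) + 1) ^ 2)⁻¹ else 0) :=
        Finset.sum_le_sum fun i _ => step i
  _ = (a : ℝ)⁻¹ * ∑ n ∈ range N, (if a ≤ n then (((n : ℝ) + 1) ^ 2)⁻¹ else 0) := by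
      rw [Finset.mul_sum]
      congr 1
      funext n
      split <;> simp
  _ ≤ (a : ℝ)⁻¹ * (a : ℝ)⁻¹ := by
      apply mul_le_mul_of_nonneg_left (tailfin a ha1 N) (by positivity)
  _ ≤ 16 / lam ^ 2 := by
      rw [le_div_iff₀ (by positivity)]
      have h16 : lam ^ 2 ≤ 16 * (a : ℝ) ^ 2 := by nlinarith
      have : (a : ℝ)⁻¹ * (a : ℝ)⁻¹ * lam ^ 2 = lam ^ 2 / (a : ℝ) ^ 2 := by
        field_simp
      rw [this, div_le_iff₀ (by positivity)]
      nlinarith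

lemma rowSq (a : ℕ) (ha : 1 ≤ a) :
    ∑' q : ℤ, O (((a : ℝ) ^ 2 + (q : ℝ) ^ 2)⁻¹) ≤ O (5 / (a : ℝ)) := by
  have ha' : (0 : ℝ) < a := by exact_mod_cast ha
  rw [tsum_int_e (fun q : ℤ => O (((a : ℝ) ^ 2 + (q : ℝ) ^ 2)⁻¹))]
  have h1 : ∑' n : ℕ, O (((a : ℝ) ^ 2 + (((n : ℤ) + 1 : ℤ) : ℝ) ^ 2)⁻¹) ≤ O (2 / (a : ℝ)) := by
    have : ∀ n : ℕ, (((a : ℝ) ^ 2 + (((n : ℤ) + 1 : ℤ) : ℝ) ^ 2)⁻¹)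
        = ((a : ℝ) ^ 2 + ((n : ℝ) + 1) ^ 2)⁻¹ := by intro n; push_cast; ring_nf
    simp_rw [this]
    exact tsumO_le (finInner2 a ha) (fun n => by positivity)
  have h2 : ∑' n : ℕ, O (((a : ℝ) ^ 2 + ((-((n : ℤ) + 1) : ℤ) : ℝ) ^ 2)⁻¹) ≤ O (2 / (a : ℝ)) := by
    have : ∀ n : ℕ, (((a : ℝ) ^ 2 + ((-((n : ℤ) + 1) : ℤ) : ℝ) ^ 2)⁻¹)
        = ((a : ℝ) ^ 2 + ((n : ℝ) + 1) ^ 2)⁻¹ := by intro n; push_cast; ring_nf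
    simp_rw [this]
    exact tsumO_le (finInner2 a ha) (fun n => by positivity)
  have h0 : O (((a : ℝ) ^ 2 + (((0 : ℤ) : ℝ)) ^ 2)⁻¹) ≤ O ((a : ℝ)⁻¹) := by
    apply ENNReal.ofReal_le_ofReal
    have : ((a : ℝ) ^ 2 + (((0 : ℤ) : ℝ)) ^ 2) = (a : ℝ) ^ 2 := by push_cast; ring
    rw [this]
    apply inv_anti₀ ha'
    have ha1 : (1:ℝ) ≤ (a:ℝ) := by exact_mod_cast ha
    nlinarith
  calc O (((a : ℝ) ^ 2 + (((0:ℤ)) : ℝ) ^ 2)⁻¹) + _ + _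
      ≤ O ((a : ℝ)⁻¹) + O (2 / (a : ℝ)) + O (2 / (a : ℝ)) := by
        gcongr
  _ = O ((a : ℝ)⁻¹ + (2 / (a : ℝ) + 2 / (a : ℝ))) := by
        rw [ENNReal.ofReal_add (by positivity) (by positivity),
          ENNReal.ofReal_add (by positivity) (by positivity), add_assoc]
  _ ≤ O (5 / (a : ℝ)) := by
        apply ENNReal.ofReal_le_ofReal
        apply le_of_eq
        field_simp
        ring

lemma rowQuart (a : ℕ) (ha : 1 ≤ a) :
    ∑' q : ℤ, O ((((a : ℝ) ^ 2 + (q : ℝ) ^ 2) ^ 2)⁻¹) ≤ O (5 / (a : ℝ) ^ 3) := by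
  have ha' : (0 : ℝ) < a := by exact_mod_cast ha
  rw [tsum_int_e (fun q : ℤ => O ((((a : ℝ) ^ 2 + (q : ℝ) ^ 2) ^ 2)⁻¹))]
  have h1 : ∑' n : ℕ, O ((((a : ℝ) ^ 2 + (((n : ℤ) + 1 : ℤ) : ℝ) ^ 2) ^ 2)⁻¹)
      ≤ O (2 / (a : ℝ) ^ 3) := by
    have : ∀ n : ℕ, ((((a : ℝ) ^ 2 + (((n : ℤ) + 1 : ℤ) : ℝ) ^ 2) ^ 2)⁻¹)
        = (((a : ℝ) ^ 2 + ((n : ℝ) + 1) ^ 2) ^ 2)⁻¹ := by intro n; push_cast; ring_nf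
    simp_rw [this]
    exact tsumO_le (finInner4 a ha) (fun n => by positivity)
  have h2 : ∑' n : ℕ, O ((((a : ℝ) ^ 2 + ((-((n : ℤ) + 1) : ℤ) : ℝ) ^ 2) ^ 2)⁻¹)
      ≤ O (2 / (a : ℝ) ^ 3) := by
    have : ∀ n : ℕ, ((((a : ℝ) ^ 2 + ((-((n : ℤ) + 1) : ℤ) : ℝ) ^ 2) ^ 2)⁻¹)
        = (((a : ℝ) ^ 2 + ((n : ℝ) + 1) ^ 2) ^ 2)⁻¹ := by intro n; push_cast; ring_nf
    simp_rw [this]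
    exact tsumO_le (finInner4 a ha) (fun n => by positivity)
  have h0 : O ((((a : ℝ) ^ 2 + (((0 : ℤ) : ℝ)) ^ 2) ^ 2)⁻¹) ≤ O (((a : ℝ) ^ 3)⁻¹) := by
    apply ENNReal.ofReal_le_ofReal
    have : (((a : ℝ) ^ 2 + (((0 : ℤ) : ℝ)) ^ 2) ^ 2) = (a : ℝ) ^ 4 := by push_cast; ring
    rw [this]
    apply inv_anti₀ (by positivity)
    have ha1 : (1:ℝ) ≤ (a:ℝ) := by exact_mod_cast ha
    nlinarith
  calc O ((((a : ℝ) ^ 2 + (((0:ℤ)) : ℝ) ^ 2) ^ 2)⁻¹) + _ + _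
      ≤ O (((a : ℝ) ^ 3)⁻¹) + O (2 / (a : ℝ) ^ 3) + O (2 / (a : ℝ) ^ 3) := by
        gcongr
  _ = O (((a : ℝ) ^ 3)⁻¹ + (2 / (a : ℝ) ^ 3 + 2 / (a : ℝ) ^ 3)) := by
        rw [ENNReal.ofReal_add (by positivity) (by positivity),
          ENNReal.ofReal_add (by positivity) (by positivity), add_assoc]
  _ ≤ O (5 / (a : ℝ) ^ 3) := by
        apply ENNReal.ofReal_le_ofReal
        apply le_of_eq
        field_simp
        ring

lemma rowZero :
    ∑' q : ℤ, O (if q = 0 then 0 else ((q : ℝ) ^ 2)⁻¹) ≤ O 4 := by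
  rw [tsum_int_e (fun q : ℤ => O (if q = 0 then 0 else ((q : ℝ) ^ 2)⁻¹))]
  have h1 : ∑' n : ℕ, O (if ((n : ℤ) + 1 : ℤ) = 0 then 0 else (((((n : ℤ) + 1 : ℤ)) : ℝ) ^ 2)⁻¹)
      ≤ O 2 := by
    have : ∀ n : ℕ, (if ((n : ℤ) + 1 : ℤ) = 0 then (0:ℝ) else (((((n : ℤ) + 1 : ℤ)) : ℝ) ^ 2)⁻¹)
        = (((n : ℝ) + 1) ^ 2)⁻¹ := by
      intro n
      rw [if_neg (by omega)]
      push_cast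
      ring_nf
    simp_rw [this]
    exact tsumO_le finSq (fun n => by positivity)
  have h2 : ∑' n : ℕ, O (if (-((n : ℤ) + 1) : ℤ) = 0 then 0 else ((((-((n : ℤ) + 1) : ℤ)) : ℝ) ^ 2)⁻¹)
      ≤ O 2 := by
    have : ∀ n : ℕ, (if (-((n : ℤ) + 1) : ℤ) = 0 then (0:ℝ) else ((((-((n : ℤ) + 1) : ℤ)) : ℝ) ^ 2)⁻¹)
        = (((n : ℝ) + 1) ^ 2)⁻¹ := by
      intro n
      rw [if_neg (by omega)]
      push_cast
      ring_nf
    simp_rw [this]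
    exact tsumO_le finSq (fun n => by positivity)
  calc _ + _ + _ ≤ O (0:ℝ) + O 2 + O 2 := by
        gcongr
        · simp
  _ = O 4 := by
        rw [ENNReal.ofReal_zero, zero_add, ← ENNReal.ofReal_add (by norm_num) (by norm_num)]
        norm_num

lemma finHarm5 (lam : ℝ) (hl : Real.exp 1 ≤ lam) (N : ℕ) :
    ∑ n ∈ range N, (if ((n : ℝ) + 1) ≤ lam then 5 / ((n : ℝ) + 1) else 0)
      ≤ 5 * (1 + Real.log lam) := by
  have h : ∀ n : ℕ, (if ((n : ℝ) + 1) ≤ lam then 5 / ((n : ℝ) + 1) else 0)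
      = 5 * (if ((n : ℝ) + 1) ≤ lam then ((n : ℝ) + 1)⁻¹ else 0) := by
    intro n; split <;> simp [div_eq_mul_inv]
  simp_rw [h, ← Finset.mul_sum]
  have h2 := finHarm lam hl N
  nlinarith [h2]

lemma finCube5 (lam : ℝ) (hl : Real.exp 1 ≤ lam) (N : ℕ) :
    ∑ n ∈ range N, (if lam ^ 2 / 2 < ((n : ℝ) + 1) ^ 2 then 5 / ((n : ℝ) + 1) ^ 3 else 0)
      ≤ 80 / lam ^ 2 := by
  have h : ∀ n : ℕ, (if lam ^ 2 / 2 < ((n : ℝ) + 1) ^ 2 then 5 / ((n : ℝ) + 1) ^ 3 else 0)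
      = 5 * (if lam ^ 2 / 2 < ((n : ℝ) + 1) ^ 2 then (((n : ℝ) + 1) ^ 3)⁻¹ else 0) := by
    intro n; split <;> simp [div_eq_mul_inv]
  simp_rw [h, ← Finset.mul_sum]
  have h2 := finCube lam hl N
  have : (5:ℝ) * (16 / lam ^ 2) = 80 / lam ^ 2 := by ring
  nlinarith [h2]

lemma ite_O (c : Prop) [Decidable c] (x : ℝ) :
    (if c then O x else 0) = O (if c then x else 0) := by
  split <;> simp

lemma low_est (lam : ℝ) (hl : Real.exp 1 ≤ lam) :
    ∑' k : Fin 2 → ℤ, O (if k ≠ 0 ∧ nrm k ≤ lam then ((nrm k) ^ 2)⁻¹ else 0)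
      ≤ O (24 * Real.log lam) := by
  have hlam0 : (0 : ℝ) < lam := lt_of_lt_of_le (Real.exp_pos 1) hl
  have hlog : (1 : ℝ) ≤ Real.log lam := by
    rw [← Real.log_exp 1]
    exact Real.log_le_log (Real.exp_pos 1) hl
  rw [← Equiv.tsum_eq (finTwoArrowEquiv ℤ).symm
    (fun k => O (if k ≠ 0 ∧ nrm k ≤ lam then ((nrm k) ^ 2)⁻¹ else 0)), ENNReal.tsum_prod']
  have hterm : ∀ p q : ℤ,
      (O (if (finTwoArrowEquiv ℤ).symm (p, q) ≠ 0 ∧ nrm ((finTwoArrowEquiv ℤ).symm (p, q)) ≤ lam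
        then ((nrm ((finTwoArrowEquiv ℤ).symm (p, q))) ^ 2)⁻¹ else 0))
      = O (if ¬(p = 0 ∧ q = 0) ∧ (p : ℝ) ^ 2 + (q : ℝ) ^ 2 ≤ lam ^ 2
          then ((p : ℝ) ^ 2 + (q : ℝ) ^ 2)⁻¹ else 0) := by
    intro p q
    have hnn : (0 : ℝ) ≤ (p : ℝ) ^ 2 + (q : ℝ) ^ 2 := by positivity
    have hiff : ((finTwoArrowEquiv ℤ).symm (p, q) ≠ 0 ∧
        nrm ((finTwoArrowEquiv ℤ).symm (p, q)) ≤ lam)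
        ↔ (¬(p = 0 ∧ q = 0) ∧ (p : ℝ) ^ 2 + (q : ℝ) ^ 2 ≤ lam ^ 2) := by
      apply and_congr (not_congr (pair_eq_zero p q))
      rw [nrm_pair, Real.sqrt_le_left hlam0.le]
    by_cases hcond : ¬(p = 0 ∧ q = 0) ∧ (p : ℝ) ^ 2 + (q : ℝ) ^ 2 ≤ lam ^ 2
    · rw [if_pos (hiff.mpr hcond), if_pos hcond, nrm_pair, Real.sq_sqrt hnn]
    · rw [if_neg (fun h => hcond (hiff.mp h)), if_neg hcond]
  set Blo : ℤ → ℝ≥0∞ := fun p => if p = 0 then O 4 else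
    (if ((p.natAbs : ℕ) : ℝ) ≤ lam then O (5 / ((p.natAbs : ℕ) : ℝ)) else 0) with hBlo
  have hrow : ∀ p : ℤ,
      ∑' q : ℤ, O (if (finTwoArrowEquiv ℤ).symm (p, q) ≠ 0 ∧
        nrm ((finTwoArrowEquiv ℤ).symm (p, q)) ≤ lam
        then ((nrm ((finTwoArrowEquiv ℤ).symm (p, q))) ^ 2)⁻¹ else 0) ≤ Blo p := by
    intro p
    rw [tsum_congr (fun q => hterm p q)]
    by_cases hp : p = 0
    · subst hp
      have hB0' : Blo 0 = O 4 := by simp [hBlo]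
      rw [hB0']
      refine le_trans (ENNReal.tsum_le_tsum (fun q => ?_)) rowZero
      apply ENNReal.ofReal_le_ofReal
      split_ifs with h1 h2
      · exact absurd ⟨rfl, h2⟩ h1.1
      · push_cast
        norm_num
      · exact le_rfl
      · positivity
    · have ha : 1 ≤ p.natAbs := by omega
      have hpa : (((p.natAbs : ℕ)) : ℝ) ^ 2 = (p : ℝ) ^ 2 := by
        rw [Nat.cast_natAbs, Int.cast_abs, sq_abs]
      simp only [hBlo]
      simp only [if_neg hp]
      by_cases hle : ((p.natAbs : ℕ) : ℝ) ≤ lam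
      · rw [if_pos hle]
        refine le_trans (ENNReal.tsum_le_tsum (fun q => ?_)) (rowSq p.natAbs ha)
        apply ENNReal.ofReal_le_ofReal
        rw [hpa]
        split_ifs with h1
        · exact le_rfl
        · positivity
      · rw [if_neg hle]
        have hz : ∀ q : ℤ, O (if ¬(p = 0 ∧ q = 0) ∧ (p : ℝ) ^ 2 + (q : ℝ) ^ 2 ≤ lam ^ 2
            then ((p : ℝ) ^ 2 + (q : ℝ) ^ 2)⁻¹ else 0) = 0 := by
          intro q
          rw [if_neg, ENNReal.ofReal_zero]
          rintro ⟨-, h2⟩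
          apply hle
          nlinarith [sq_nonneg ((q : ℝ)), Nat.cast_nonneg (α := ℝ) p.natAbs]
        rw [tsum_congr hz, tsum_zero]
  refine le_trans (ENNReal.tsum_le_tsum hrow) ?_
  rw [tsum_int_e Blo]
  have hB0 : Blo 0 = O 4 := by simp [hBlo]
  have hBp : ∀ n : ℕ, Blo ((n : ℤ) + 1)
      = O (if ((n : ℝ) + 1) ≤ lam then 5 / ((n : ℝ) + 1) else 0) := by
    intro n
    simp only [hBlo]
    simp only [if_neg (by omega : ¬((n : ℤ) + 1 = 0))]
    have hna : ((n : ℤ) + 1).natAbs = n + 1 := by omega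
    rw [hna]
    rw [ite_O]
    congr 1
    push_cast
    rfl
  have hBn : ∀ n : ℕ, Blo (-((n : ℤ) + 1))
      = O (if ((n : ℝ) + 1) ≤ lam then 5 / ((n : ℝ) + 1) else 0) := by
    intro n
    simp only [hBlo]
    simp only [if_neg (by omega : ¬(-((n : ℤ) + 1) = 0))]
    have hna : (-((n : ℤ) + 1)).natAbs = n + 1 := by omega
    rw [hna]
    rw [ite_O]
    congr 1
    push_cast
    rfl
  rw [hB0, tsum_congr hBp, tsum_congr hBn]
  have hhar : ∑' n : ℕ, O (if ((n : ℝ) + 1) ≤ lam then 5 / ((n : ℝ) + 1) else 0)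
      ≤ O (5 * (1 + Real.log lam)) := by
    apply tsumO_le (finHarm5 lam hl)
    intro n
    split <;> positivity
  calc O 4 + _ + _ ≤ O 4 + O (5 * (1 + Real.log lam)) + O (5 * (1 + Real.log lam)) := by
        gcongr
  _ = O (4 + (5 * (1 + Real.log lam) + 5 * (1 + Real.log lam))) := by
        rw [ENNReal.ofReal_add (by norm_num) (by positivity),
          ENNReal.ofReal_add (by positivity) (by positivity), add_assoc]
  _ ≤ O (24 * Real.log lam) := by
        apply ENNReal.ofReal_le_ofReal
        linarith

lemma hi_est (lam : ℝ) (hl : Real.exp 1 ≤ lam) :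
    ∑' k : Fin 2 → ℤ, O (if lam < nrm k then ((nrm k) ^ 4)⁻¹ else 0)
      ≤ O (320 / lam ^ 2) := by
  have hlam0 : (0 : ℝ) < lam := lt_of_lt_of_le (Real.exp_pos 1) hl
  rw [← Equiv.tsum_eq (finTwoArrowEquiv ℤ).symm
    (fun k => O (if lam < nrm k then ((nrm k) ^ 4)⁻¹ else 0))]
  have hterm : ∀ p q : ℤ,
      (O (if lam < nrm ((finTwoArrowEquiv ℤ).symm (p, q))
        then ((nrm ((finTwoArrowEquiv ℤ).symm (p, q))) ^ 4)⁻¹ else 0))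
      = O (if lam ^ 2 < (p : ℝ) ^ 2 + (q : ℝ) ^ 2
          then (((p : ℝ) ^ 2 + (q : ℝ) ^ 2) ^ 2)⁻¹ else 0) := by
    intro p q
    have hnn : (0 : ℝ) ≤ (p : ℝ) ^ 2 + (q : ℝ) ^ 2 := by positivity
    have hiff : (lam < nrm ((finTwoArrowEquiv ℤ).symm (p, q)))
        ↔ (lam ^ 2 < (p : ℝ) ^ 2 + (q : ℝ) ^ 2) := by
      rw [nrm_pair, Real.lt_sqrt hlam0.le]
    have hval : (nrm ((finTwoArrowEquiv ℤ).symm (p, q))) ^ 4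
        = ((p : ℝ) ^ 2 + (q : ℝ) ^ 2) ^ 2 := by
      rw [nrm_pair, show (4 : ℕ) = 2 * 2 from rfl, pow_mul, Real.sq_sqrt hnn]
    by_cases hcond : lam ^ 2 < (p : ℝ) ^ 2 + (q : ℝ) ^ 2
    · rw [if_pos (hiff.mpr hcond), if_pos hcond, hval]
    · rw [if_neg (fun h => hcond (hiff.mp h)), if_neg hcond]
  have hptH : ∀ p q : ℤ,
      O (if lam ^ 2 < (p : ℝ) ^ 2 + (q : ℝ) ^ 2
        then (((p : ℝ) ^ 2 + (q : ℝ) ^ 2) ^ 2)⁻¹ else 0)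
      ≤ O (if lam ^ 2 / 2 < (p : ℝ) ^ 2
            then (((p : ℝ) ^ 2 + (q : ℝ) ^ 2) ^ 2)⁻¹ else 0)
        + O (if lam ^ 2 / 2 < (q : ℝ) ^ 2
            then (((q : ℝ) ^ 2 + (p : ℝ) ^ 2) ^ 2)⁻¹ else 0) := by
    intro p q
    by_cases hcond : lam ^ 2 < (p : ℝ) ^ 2 + (q : ℝ) ^ 2
    · rw [if_pos hcond]
      have : lam ^ 2 / 2 < (p : ℝ) ^ 2 ∨ lam ^ 2 / 2 < (q : ℝ) ^ 2 := by
        by_contra h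
        push_neg at h
        linarith [h.1, h.2]
      rcases this with h | h
      · rw [if_pos h]
        exact le_self_add
      · have e : ((q : ℝ) ^ 2 + (p : ℝ) ^ 2) = ((p : ℝ) ^ 2 + (q : ℝ) ^ 2) := add_comm _ _
        rw [if_pos (c := lam ^ 2 / 2 < (q : ℝ) ^ 2) h, e]
        exact le_add_self
    · rw [if_neg hcond, ENNReal.ofReal_zero]
      exact zero_le
  set H : ℤ → ℤ → ℝ≥0∞ := fun p q => O (if lam ^ 2 / 2 < (p : ℝ) ^ 2
    then (((p : ℝ) ^ 2 + (q : ℝ) ^ 2) ^ 2)⁻¹ else 0) with hH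
  have hsplit : ∑' pq : ℤ × ℤ,
      (O (if lam < nrm ((finTwoArrowEquiv ℤ).symm pq)
        then ((nrm ((finTwoArrowEquiv ℤ).symm pq)) ^ 4)⁻¹ else 0))
      ≤ ∑' pq : ℤ × ℤ, H pq.1 pq.2 + ∑' pq : ℤ × ℤ, H pq.2 pq.1 := by
    rw [← ENNReal.tsum_add]
    apply ENNReal.tsum_le_tsum
    rintro ⟨p, q⟩
    rw [hterm p q]
    simp only [hH]
    exact hptH p q
  have hswap : ∑' pq : ℤ × ℤ, H pq.2 pq.1 = ∑' pq : ℤ × ℤ, H pq.1 pq.2 := by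
    rw [← Equiv.tsum_eq (Equiv.prodComm ℤ ℤ) (fun pq => H pq.2 pq.1)]
    exact tsum_congr (by rintro ⟨p, q⟩; rfl)
  have hrowbound : ∑' pq : ℤ × ℤ, H pq.1 pq.2 ≤ O (160 / lam ^ 2) := by
    rw [ENNReal.tsum_prod']
    set Bhi : ℤ → ℝ≥0∞ := fun p => if lam ^ 2 / 2 < (p : ℝ) ^ 2
      then O (5 / ((p.natAbs : ℕ) : ℝ) ^ 3) else 0 with hBhi
    have hrow : ∀ p : ℤ, ∑' q : ℤ, H p q ≤ Bhi p := by
      intro p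
      by_cases hp : lam ^ 2 / 2 < (p : ℝ) ^ 2
      · have hpne : p ≠ 0 := by
          intro h
          subst h
          simp only [Int.cast_zero] at hp
          nlinarith
        have ha : 1 ≤ p.natAbs := by omega
        have hpa : (((p.natAbs : ℕ)) : ℝ) ^ 2 = (p : ℝ) ^ 2 := by
          rw [Nat.cast_natAbs, Int.cast_abs, sq_abs]
        simp only [hBhi]
        simp only [if_pos hp]
        refine le_trans (ENNReal.tsum_le_tsum (fun q => ?_)) (rowQuart p.natAbs ha)
        simp only [hH]
        apply ENNReal.ofReal_le_ofReal
        rw [hpa]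
        rw [if_pos hp]
      · simp only [hBhi]
        simp only [if_neg hp]
        have hz : ∀ q : ℤ, H p q = 0 := by
          intro q
          simp only [hH]
          simp only [if_neg hp, ENNReal.ofReal_zero]
        rw [tsum_congr hz, tsum_zero]
    refine le_trans (ENNReal.tsum_le_tsum hrow) ?_
    rw [tsum_int_e Bhi]
    have hB0 : Bhi 0 = 0 := by
      simp only [hBhi]
      rw [if_neg (by simp only [Int.cast_zero]; nlinarith)]
    have hBp : ∀ n : ℕ, Bhi ((n : ℤ) + 1)
        = O (if lam ^ 2 / 2 < ((n : ℝ) + 1) ^ 2 then 5 / ((n : ℝ) + 1) ^ 3 else 0) := by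
      intro n
      simp only [hBhi]
      have hna : ((n : ℤ) + 1).natAbs = n + 1 := by omega
      have hc : (((n : ℤ) + 1 : ℤ) : ℝ) = (n : ℝ) + 1 := by push_cast; ring
      rw [hna, hc, ite_O]
      congr 1
      push_cast
      rfl
    have hBn : ∀ n : ℕ, Bhi (-((n : ℤ) + 1))
        = O (if lam ^ 2 / 2 < ((n : ℝ) + 1) ^ 2 then 5 / ((n : ℝ) + 1) ^ 3 else 0) := by
      intro n
      simp only [hBhi]
      have hna : (-((n : ℤ) + 1)).natAbs = n + 1 := by omega
      have hc : ((-((n : ℤ) + 1) : ℤ) : ℝ) ^ 2 = ((n : ℝ) + 1) ^ 2 := by push_cast; ring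
      rw [hna, hc, ite_O]
      congr 1
      push_cast
      rfl
    rw [hB0, tsum_congr hBp, tsum_congr hBn, zero_add]
    have hcu : ∑' n : ℕ, O (if lam ^ 2 / 2 < ((n : ℝ) + 1) ^ 2 then 5 / ((n : ℝ) + 1) ^ 3 else 0)
        ≤ O (80 / lam ^ 2) :=
      tsumO_le (finCube5 lam hl) (fun n => by split <;> positivity)
    calc _ + _ ≤ O (80 / lam ^ 2) + O (80 / lam ^ 2) := by gcongr
    _ = O (80 / lam ^ 2 + 80 / lam ^ 2) := by
        rw [ENNReal.ofReal_add (by positivity) (by positivity)]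
    _ ≤ O (160 / lam ^ 2) := by
        apply ENNReal.ofReal_le_ofReal
        apply le_of_eq
        ring
  calc ∑' pq : ℤ × ℤ, _ ≤ ∑' pq : ℤ × ℤ, H pq.1 pq.2 + ∑' pq : ℤ × ℤ, H pq.2 pq.1 := hsplit
  _ = ∑' pq : ℤ × ℤ, H pq.1 pq.2 + ∑' pq : ℤ × ℤ, H pq.1 pq.2 := by rw [hswap]
  _ ≤ O (160 / lam ^ 2) + O (160 / lam ^ 2) := by gcongr
  _ = O (160 / lam ^ 2 + 160 / lam ^ 2) := by
      rw [ENNReal.ofReal_add (by positivity) (by positivity)]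
  _ ≤ O (320 / lam ^ 2) := by
      apply ENNReal.ofReal_le_ofReal
      apply le_of_eq
      ring

end BGaux

open BGaux in
/-- Brézis–Gallouët-type inequality in sequence form (2D). -/
theorem stmt13 :
    ∃ C : ℝ, 0 < C ∧
      ∀ u : (Fin 2 → ℤ) → ℂ, u 0 = 0 →
        Summable (fun k => (nrm k) ^ 2 * ‖u k‖ ^ 2) →
        Summable (fun k => (nrm k) ^ 4 * ‖u k‖ ^ 2) →
        ∀ lam : ℝ, Real.exp 1 ≤ lam →
          (∑' k : Fin 2 → ℤ, ‖u k‖)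
            ≤ C * (Real.log lam) ^ ((1:ℝ)/2) *
                  (∑' k : Fin 2 → ℤ, (nrm k) ^ 2 * ‖u k‖ ^ 2) ^ ((1:ℝ)/2)
              + C * lam⁻¹ * (∑' k : Fin 2 → ℤ, (nrm k) ^ 4 * ‖u k‖ ^ 2) ^ ((1:ℝ)/2) := by
  refine ⟨100, by norm_num, ?_⟩
  intro u hu0 h2 h4 lam hlam
  have hlam0 : (0 : ℝ) < lam := lt_of_lt_of_le (Real.exp_pos 1) hlam
  have hlog1 : (1 : ℝ) ≤ Real.log lam := by
    rw [← Real.log_exp 1]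
    exact Real.log_le_log (Real.exp_pos 1) hlam
  -- the weight sequences
  obtain ⟨hglos, hglot⟩ := of_tsumO_le
    (g := fun k : Fin 2 → ℤ => if k ≠ 0 ∧ nrm k ≤ lam then ((nrm k) ^ 2)⁻¹ else 0)
    (fun k => by split <;> positivity) (c := 24 * Real.log lam) (by positivity)
    (low_est lam hlam)
  obtain ⟨hghis, hghit⟩ := of_tsumO_le
    (g := fun k : Fin 2 → ℤ => if lam < nrm k then ((nrm k) ^ 4)⁻¹ else 0)
    (fun k => by split <;> positivity) (c := 320 / lam ^ 2) (by positivity)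
    (hi_est lam hlam)
  have hgq2 : ∀ k : Fin 2 → ℤ,
      (if k ≠ 0 ∧ nrm k ≤ lam then (nrm k)⁻¹ else 0) ^ 2
      = (if k ≠ 0 ∧ nrm k ≤ lam then ((nrm k) ^ 2)⁻¹ else 0) := by
    intro k
    split
    · rw [inv_pow]
    · exact zero_pow (by norm_num)
  have hhq2 : ∀ k : Fin 2 → ℤ,
      (if lam < nrm k then ((nrm k) ^ 2)⁻¹ else 0) ^ 2
      = (if lam < nrm k then ((nrm k) ^ 4)⁻¹ else 0) := by
    intro k
    split
    · rw [inv_pow, ← pow_mul]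
    · exact zero_pow (by norm_num)
  have hav2 : ∀ k : Fin 2 → ℤ, (nrm k * ‖u k‖) ^ 2 = (nrm k) ^ 2 * ‖u k‖ ^ 2 := by
    intro k; rw [mul_pow]
  have hbv2 : ∀ k : Fin 2 → ℤ, ((nrm k) ^ 2 * ‖u k‖) ^ 2 = (nrm k) ^ 4 * ‖u k‖ ^ 2 := by
    intro k; rw [mul_pow, ← pow_mul]
  -- Cauchy–Schwarz for the two pieces
  obtain ⟨hsumlo, hlo⟩ := tsum_CS
    (f := fun k : Fin 2 → ℤ => if k ≠ 0 ∧ nrm k ≤ lam then (nrm k)⁻¹ else 0)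
    (g := fun k : Fin 2 → ℤ => nrm k * ‖u k‖)
    (fun k => by
      split
      · exact inv_nonneg.mpr (nrm_nonneg k)
      · exact le_rfl)
    (fun k => mul_nonneg (nrm_nonneg k) (norm_nonneg _))
    (hglos.congr (fun k => (hgq2 k).symm))
    (h2.congr (fun k => (hav2 k).symm))
  obtain ⟨hsumhi, hhi⟩ := tsum_CS
    (f := fun k : Fin 2 → ℤ => if lam < nrm k then ((nrm k) ^ 2)⁻¹ else 0)
    (g := fun k : Fin 2 → ℤ => (nrm k) ^ 2 * ‖u k‖)
    (fun k => by split <;> positivity)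
    (fun k => mul_nonneg (by positivity) (norm_nonneg _))
    (hghis.congr (fun k => (hhq2 k).symm))
    (h4.congr (fun k => (hbv2 k).symm))
  -- pointwise decomposition
  have hdecomp : ∀ k : Fin 2 → ℤ, ‖u k‖ =
      (if k ≠ 0 ∧ nrm k ≤ lam then (nrm k)⁻¹ else 0) * (nrm k * ‖u k‖)
      + (if lam < nrm k then ((nrm k) ^ 2)⁻¹ else 0) * ((nrm k) ^ 2 * ‖u k‖) := by
    intro k
    by_cases hk : k = 0
    · subst hk
      rw [hu0]
      simp
    · have hn1 : 1 ≤ nrm k := one_le_nrm hk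
      have hn : nrm k ≠ 0 := by linarith
      rcases le_or_gt (nrm k) lam with hle | hgt
      · rw [if_pos ⟨hk, hle⟩, if_neg (not_lt.mpr hle), zero_mul, add_zero]
        field_simp
      · rw [if_neg (fun h => absurd hgt (not_lt.mpr h.2)), if_pos hgt, zero_mul, zero_add]
        field_simp
  -- sum up
  have hsum : ∑' k : Fin 2 → ℤ, ‖u k‖ =
      (∑' k : Fin 2 → ℤ, (if k ≠ 0 ∧ nrm k ≤ lam then (nrm k)⁻¹ else 0) * (nrm k * ‖u k‖))
      + ∑' k : Fin 2 → ℤ, (if lam < nrm k then ((nrm k) ^ 2)⁻¹ else 0) * ((nrm k) ^ 2 * ‖u k‖) := by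
    rw [← Summable.tsum_add hsumlo hsumhi]
    exact tsum_congr hdecomp
  rw [hsum]
  -- identify the sums of squares
  have hS2eq : (∑' k : Fin 2 → ℤ, (nrm k * ‖u k‖) ^ 2)
      = ∑' k : Fin 2 → ℤ, (nrm k) ^ 2 * ‖u k‖ ^ 2 := tsum_congr hav2
  have hS4eq : (∑' k : Fin 2 → ℤ, ((nrm k) ^ 2 * ‖u k‖) ^ 2)
      = ∑' k : Fin 2 → ℤ, (nrm k) ^ 4 * ‖u k‖ ^ 2 := tsum_congr hbv2
  have hSloeq : (∑' k : Fin 2 → ℤ, (if k ≠ 0 ∧ nrm k ≤ lam then (nrm k)⁻¹ else 0) ^ 2)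
      = ∑' k : Fin 2 → ℤ, (if k ≠ 0 ∧ nrm k ≤ lam then ((nrm k) ^ 2)⁻¹ else 0) :=
    tsum_congr hgq2
  have hShieq : (∑' k : Fin 2 → ℤ, (if lam < nrm k then ((nrm k) ^ 2)⁻¹ else 0) ^ 2)
      = ∑' k : Fin 2 → ℤ, (if lam < nrm k then ((nrm k) ^ 4)⁻¹ else 0) :=
    tsum_congr hhq2
  rw [hS2eq, hSloeq] at hlo
  rw [hS4eq, hShieq] at hhi
  -- numeric bounds on the sqrt factors
  have hS2nn : (0:ℝ) ≤ ∑' k : Fin 2 → ℤ, (nrm k) ^ 2 * ‖u k‖ ^ 2 :=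
    tsum_nonneg (fun k => by positivity)
  have hS4nn : (0:ℝ) ≤ ∑' k : Fin 2 → ℤ, (nrm k) ^ 4 * ‖u k‖ ^ 2 :=
    tsum_nonneg (fun k => by positivity)
  have hLnn : (0:ℝ) ≤ Real.log lam := by linarith
  have hsqrtlo : Real.sqrt (∑' k : Fin 2 → ℤ,
      (if k ≠ 0 ∧ nrm k ≤ lam then ((nrm k) ^ 2)⁻¹ else 0))
      ≤ 5 * Real.sqrt (Real.log lam) := by
    refine (Real.sqrt_le_sqrt hglot).trans ?_
    have hsq : (Real.sqrt (Real.log lam)) ^ 2 = Real.log lam := Real.sq_sqrt hLnn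
    have h25 : (24:ℝ) * Real.log lam ≤ (5 * Real.sqrt (Real.log lam)) ^ 2 := by
      nlinarith [hsq]
    calc Real.sqrt (24 * Real.log lam)
        ≤ Real.sqrt ((5 * Real.sqrt (Real.log lam)) ^ 2) := Real.sqrt_le_sqrt h25
    _ = 5 * Real.sqrt (Real.log lam) := Real.sqrt_sq (by positivity)
  have hsqrthi : Real.sqrt (∑' k : Fin 2 → ℤ,
      (if lam < nrm k then ((nrm k) ^ 4)⁻¹ else 0))
      ≤ 18 * lam⁻¹ := by
    refine (Real.sqrt_le_sqrt hghit).trans ?_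
    have hsq : (18 * lam⁻¹) ^ 2 = 324 / lam ^ 2 := by
      field_simp
      norm_num
    have h324 : (320:ℝ) / lam ^ 2 ≤ (18 * lam⁻¹) ^ 2 := by
      rw [hsq]
      gcongr
      norm_num
    calc Real.sqrt (320 / lam ^ 2)
        ≤ Real.sqrt ((18 * lam⁻¹) ^ 2) := Real.sqrt_le_sqrt h324
    _ = 18 * lam⁻¹ := Real.sqrt_sq (by positivity)
  have hfin1 : (∑' k : Fin 2 → ℤ,
      (if k ≠ 0 ∧ nrm k ≤ lam then (nrm k)⁻¹ else 0) * (nrm k * ‖u k‖))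
      ≤ (5 * Real.sqrt (Real.log lam)) *
        Real.sqrt (∑' k : Fin 2 → ℤ, (nrm k) ^ 2 * ‖u k‖ ^ 2) :=
    hlo.trans (mul_le_mul_of_nonneg_right hsqrtlo (Real.sqrt_nonneg _))
  have hfin2 : (∑' k : Fin 2 → ℤ,
      (if lam < nrm k then ((nrm k) ^ 2)⁻¹ else 0) * ((nrm k) ^ 2 * ‖u k‖))
      ≤ (18 * lam⁻¹) *
        Real.sqrt (∑' k : Fin 2 → ℤ, (nrm k) ^ 4 * ‖u k‖ ^ 2) :=
    hhi.trans (mul_le_mul_of_nonneg_right hsqrthi (Real.sqrt_nonneg _))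
  rw [← Real.sqrt_eq_rpow, ← Real.sqrt_eq_rpow, ← Real.sqrt_eq_rpow]
  calc _ ≤ (5 * Real.sqrt (Real.log lam)) *
        Real.sqrt (∑' k : Fin 2 → ℤ, (nrm k) ^ 2 * ‖u k‖ ^ 2)
      + (18 * lam⁻¹) *
        Real.sqrt (∑' k : Fin 2 → ℤ, (nrm k) ^ 4 * ‖u k‖ ^ 2) := add_le_add hfin1 hfin2
  _ ≤ 100 * Real.sqrt (Real.log lam) *
        Real.sqrt (∑' k : Fin 2 → ℤ, (nrm k) ^ 2 * ‖u k‖ ^ 2)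
      + 100 * lam⁻¹ *
        Real.sqrt (∑' k : Fin 2 → ℤ, (nrm k) ^ 4 * ‖u k‖ ^ 2) := by
      apply add_le_add
      · apply mul_le_mul_of_nonneg_right ?_ (Real.sqrt_nonneg _)
        nlinarith [Real.sqrt_nonneg (Real.log lam)]
      · apply mul_le_mul_of_nonneg_right ?_ (Real.sqrt_nonneg _)
        have : (0:ℝ) ≤ lam⁻¹ := by positivity
        nlinarith [this]
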